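/- For every natural number n ≥ 2, letting k = n(n-1)/2 + 1, there exists a surjective colouring Δ : ℕ^(2) ↠ [k] with |F_Δ| = n; consequently ψ(n(n-1)/2 + 1) = n. -/

import Mathlib

/-- The colour of the unordered edge `{x, y}` (only values on distinct pairs matter). -/
def edgeCol (Δ : ℕ → ℕ → ℕ) (x y : ℕ) : ℕ := Δ (min x y) (max x y)

/-- `colourSet Δ X` is the set of colours attained by `Δ` on edges with both endpoints in `X`. -/
def colourSet (Δ : ℕ → ℕ → ℕ) (X : Set ℕ) : Set ℕ :=
  {c | ∃ x ∈ X, ∃ y ∈ X, x ≠ y ∧ edgeCol Δ x y = c}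

/-- `Δ` is a surjective colouring `ℕ^(2) ↠ [k]` of the edges of the complete
graph on `ℕ` with colour set `[k] = {1, …, k}`. -/
def IsColouring (Δ : ℕ → ℕ → ℕ) (k : ℕ) : Prop :=
  (∀ x y : ℕ, x ≠ y → edgeCol Δ x y ∈ Finset.Icc 1 k) ∧
  (∀ c ∈ Finset.Icc 1 k, ∃ x y : ℕ, x ≠ y ∧ edgeCol Δ x y = c)

/-- `F_Δ`: the set of `m ∈ [k]` for which some infinite `X ⊆ ℕ` is exactly `m`-coloured. -/
def FSet (Δ : ℕ → ℕ → ℕ) (k : ℕ) : Set ℕ :=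
  {m | m ∈ Finset.Icc 1 k ∧ ∃ X : Set ℕ, X.Infinite ∧ (colourSet Δ X).ncard = m}

/-- `ψ k`: the minimum of `|F_Δ|` over all surjective colourings `Δ : ℕ^(2) ↠ [k]`. -/
noncomputable def psi (k : ℕ) : ℕ :=
  sInf {m | ∃ Δ : ℕ → ℕ → ℕ, IsColouring Δ k ∧ (FSet Δ k).ncard = m}

-- ===== generic lemmas =====

lemma edgeCol_comm (Δ : ℕ → ℕ → ℕ) (x y : ℕ) : edgeCol Δ x y = edgeCol Δ y x := by
  unfold edgeCol; rw [min_comm, max_comm]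

lemma edgeCol_of_lt (Δ : ℕ → ℕ → ℕ) {x y : ℕ} (h : x < y) : edgeCol Δ x y = Δ x y := by
  unfold edgeCol; rw [min_eq_left h.le, max_eq_right h.le]

lemma mem_colourSet_iff {Δ : ℕ → ℕ → ℕ} {X : Set ℕ} {c : ℕ} :
    c ∈ colourSet Δ X ↔ ∃ x ∈ X, ∃ y ∈ X, x < y ∧ edgeCol Δ x y = c := by
  constructor
  · rintro ⟨x, hx, y, hy, hxy, rfl⟩
    rcases lt_or_gt_of_ne hxy with h | h
    · exact ⟨x, hx, y, hy, h, rfl⟩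
    · exact ⟨y, hy, x, hx, h, (edgeCol_comm Δ x y).symm⟩
  · rintro ⟨x, hx, y, hy, hxy, rfl⟩
    exact ⟨x, hx, y, hy, hxy.ne, rfl⟩

lemma tri_succ (i : ℕ) : i * (i - 1) / 2 + i = (i + 1) * i / 2 := by
  have h2 : (0:ℕ) < 2 := by norm_num
  have h := Nat.add_mul_div_left (i * (i - 1)) i h2
  have he : i * (i - 1) + 2 * i = (i + 1) * i := by
    cases i with
    | zero => rfl
    | succ m => simp [Nat.succ_sub_one]; ring
  omega

lemma tri_mono {a b : ℕ} (h : a ≤ b) : a * (a - 1) / 2 ≤ b * (b - 1) / 2 :=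
  Nat.div_le_div_right (Nat.mul_le_mul h (by omega))

lemma tri_lt {a b : ℕ} (h1 : 1 ≤ a) (h : a < b) : a * (a - 1) / 2 < b * (b - 1) / 2 := by
  have h3 : (a + 1) * a / 2 ≤ b * (b - 1) / 2 :=
    Nat.div_le_div_right (Nat.mul_le_mul (by omega) (by omega))
  have h4 := tri_succ a
  omega

lemma two_mul_tri (t : ℕ) : 2 * (t * (t - 1) / 2) = t * (t - 1) := by
  have h : Even (t * (t - 1)) := by
    cases t with
    | zero => simp
    | succ m => simp [Nat.succ_sub_one]; rw [mul_comm]; exact Nat.even_mul_succ_self m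
  obtain ⟨r, hr⟩ := h
  rw [hr]
  omega

lemma pigeon {A : Set ℕ} (hA : A.Infinite) (F : Finset ℕ) (f : ℕ → ℕ)
    (hf : ∀ x ∈ A, f x ∈ F) : ∃ c ∈ F, {x ∈ A | f x = c}.Infinite := by
  by_contra h
  push_neg at h
  have hsub : A ⊆ ⋃ c ∈ (F : Set ℕ), {x ∈ A | f x = c} := by
    intro x hx
    exact Set.mem_biUnion (hf x hx) ⟨hx, rfl⟩
  exact hA ((Set.Finite.biUnion F.finite_toSet
    (fun c hc => h c hc)).subset hsub)

-- ===== rainbow colouring (upper bound) =====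

def ec (x y : ℕ) : ℕ := y * (y - 1) / 2 + x + 1

def rb (n x y : ℕ) : ℕ := if y < n then ec x y else n * (n - 1) / 2 + 1

lemma ec_le {x y n : ℕ} (h1 : x < y) (h2 : y < n) : ec x y ≤ n * (n - 1) / 2 := by
  have h3 : ec x y ≤ y * (y - 1) / 2 + y := by unfold ec; omega
  have h4 := tri_succ y
  have h5 : (y + 1) * y / 2 ≤ n * (n - 1) / 2 :=
    Nat.div_le_div_right (Nat.mul_le_mul (by omega) (by omega))
  omega

lemma ec_lt_ec {x y x' y' : ℕ} (h1 : x < y) (h2 : y < y') : ec x y < ec x' y' := by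
  have h3 : ec x y ≤ y * (y - 1) / 2 + y := by unfold ec; omega
  have h4 := tri_succ y
  have h5 : (y + 1) * y / 2 ≤ y' * (y' - 1) / 2 :=
    Nat.div_le_div_right (Nat.mul_le_mul (by omega) (by omega))
  have h6 : y' * (y' - 1) / 2 < ec x' y' := by unfold ec; omega
  omega

lemma ec_inj {x y x' y' : ℕ} (h : x < y) (h' : x' < y') (he : ec x y = ec x' y') :
    x = x' ∧ y = y' := by
  have hy : y = y' := by
    by_contra hne
    rcases lt_or_gt_of_ne hne with hlt | hlt
    · exact absurd he (Nat.ne_of_lt (ec_lt_ec h hlt))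
    · exact absurd he.symm (Nat.ne_of_lt (ec_lt_ec h' hlt))
  subst hy
  refine ⟨?_, rfl⟩
  unfold ec at he
  omega

lemma ec_surj : ∀ n, ∀ c, 1 ≤ c → c ≤ n * (n - 1) / 2 →
    ∃ x y, x < y ∧ y < n ∧ ec x y = c := by
  intro n
  induction n with
  | zero => intro c h1 h2; simp at h2; omega
  | succ n ih =>
    intro c h1 h2
    by_cases hc : c ≤ n * (n - 1) / 2
    · obtain ⟨x, y, h3, h4, h5⟩ := ih c h1 hc
      exact ⟨x, y, h3, by omega, h5⟩
    · have ht := tri_succ n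
      have h2' : (n + 1) * (n + 1 - 1) / 2 = (n + 1) * n / 2 := by simp
      rw [h2'] at h2
      refine ⟨c - n * (n - 1) / 2 - 1, n, by omega, by omega, ?_⟩
      unfold ec
      omega

lemma card_pairs_lt (S : Finset ℕ) :
    ((S ×ˢ S).filter (fun p => p.1 < p.2)).card = S.card * (S.card - 1) / 2 := by
  classical
  have hunion : (S ×ˢ S).filter (fun p => p.1 < p.2) ∪ (S ×ˢ S).filter (fun p => p.2 < p.1)
      = S.offDiag := by
    ext p
    simp only [Finset.mem_union, Finset.mem_filter, Finset.mem_product, Finset.mem_offDiag]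
    constructor
    · rintro (⟨⟨ha, hb⟩, hl⟩ | ⟨⟨ha, hb⟩, hl⟩) <;> exact ⟨ha, hb, by omega⟩
    · rintro ⟨ha, hb, hne⟩
      rcases lt_or_gt_of_ne hne with hl | hl
      · exact Or.inl ⟨⟨ha, hb⟩, hl⟩
      · exact Or.inr ⟨⟨ha, hb⟩, hl⟩
  have hdisj : Disjoint ((S ×ˢ S).filter (fun p => p.1 < p.2))
      ((S ×ˢ S).filter (fun p => p.2 < p.1)) := by
    rw [Finset.disjoint_left]
    intro p hp hq
    simp only [Finset.mem_filter] at hp hq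
    omega
  have hcards := Finset.card_union_of_disjoint hdisj
  rw [hunion, Finset.offDiag_card] at hcards
  have hbij : ((S ×ˢ S).filter (fun p => p.1 < p.2)).card
      = ((S ×ˢ S).filter (fun p => p.2 < p.1)).card := by
    apply Finset.card_bij (fun p _ => Prod.swap p)
    · intro p hp
      simp only [Finset.mem_filter, Finset.mem_product] at hp ⊢
      exact ⟨⟨hp.1.2, hp.1.1⟩, hp.2⟩
    · intro p hp q hq hpq
      exact Prod.swap_injective hpq
    · intro p hp
      simp only [Finset.mem_filter, Finset.mem_product] at hp
      refine ⟨Prod.swap p, ?_, ?_⟩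
      · simp only [Finset.mem_filter, Finset.mem_product, Prod.fst_swap, Prod.snd_swap]
        exact ⟨⟨hp.1.2, hp.1.1⟩, hp.2⟩
      · simp
  have hmul : S.card * S.card - S.card = S.card * (S.card - 1) := by
    cases hS : S.card with
    | zero => simp
    | succ m =>
      have : (m + 1) * (m + 1) = (m + 1) * m + (m + 1) := by ring
      simp only [Nat.succ_sub_one]
      omega
  have h2t := two_mul_tri S.card
  omega

lemma edgeCol_rb_lt {n x y : ℕ} (h : x < y) (hy : y < n) :
    edgeCol (rb n) x y = ec x y := by
  rw [edgeCol_of_lt _ h]; unfold rb; rw [if_pos hy]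

lemma edgeCol_rb_ge {n x y : ℕ} (hy : n ≤ max x y) :
    edgeCol (rb n) x y = n * (n - 1) / 2 + 1 := by
  unfold edgeCol rb; rw [if_neg (not_lt.2 hy)]

lemma isColouring_rb (n : ℕ) (hn : 2 ≤ n) :
    (∀ x y : ℕ, x ≠ y → edgeCol (rb n) x y ∈ Finset.Icc 1 (n * (n - 1) / 2 + 1)) ∧
    (∀ c ∈ Finset.Icc 1 (n * (n - 1) / 2 + 1), ∃ x y : ℕ, x ≠ y ∧ edgeCol (rb n) x y = c) := by
  constructor
  · have aux : ∀ x y, x < y → edgeCol (rb n) x y ∈ Finset.Icc 1 (n * (n - 1) / 2 + 1) := by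
      intro x y hxy
      by_cases hy : y < n
      · rw [edgeCol_rb_lt hxy hy, Finset.mem_Icc]
        have := ec_le hxy hy
        unfold ec at *
        omega
      · rw [edgeCol_rb_ge (le_max_of_le_right (not_lt.1 hy)), Finset.mem_Icc]
        omega
    intro x y hxy
    rcases lt_or_gt_of_ne hxy with h | h
    · exact aux x y h
    · rw [edgeCol_comm]; exact aux y x h
  · intro c hc
    rw [Finset.mem_Icc] at hc
    by_cases hsmall : c ≤ n * (n - 1) / 2
    · obtain ⟨x, y, h1, h2, h3⟩ := ec_surj n c hc.1 hsmall
      exact ⟨x, y, h1.ne, by rw [edgeCol_rb_lt h1 h2]; exact h3⟩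
    · refine ⟨0, n, by omega, ?_⟩
      rw [edgeCol_rb_ge (le_max_of_le_right le_rfl)]
      omega

lemma rainbow_colourSet (n : ℕ) (X : Set ℕ) (hX : X.Infinite)
    [DecidablePred (· ∈ X)] :
    colourSet (rb n) X =
      ↑((((Finset.range n).filter (· ∈ X) ×ˢ (Finset.range n).filter (· ∈ X)).filter
          (fun p => p.1 < p.2)).image (fun p => ec p.1 p.2) ∪ {n * (n - 1) / 2 + 1}) := by
  classical
  set S := (Finset.range n).filter (· ∈ X) with hS
  ext c
  rw [Finset.coe_union, Set.mem_union, mem_colourSet_iff]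
  constructor
  · rintro ⟨x, hx, y, hy, hxy, rfl⟩
    by_cases hyn : y < n
    · left
      rw [Finset.coe_image, Set.mem_image]
      refine ⟨(x, y), ?_, by rw [edgeCol_rb_lt hxy hyn]⟩
      rw [Finset.mem_coe, Finset.mem_filter, Finset.mem_product]
      refine ⟨⟨?_, ?_⟩, hxy⟩ <;> rw [hS, Finset.mem_filter, Finset.mem_range]
      · exact ⟨by omega, hx⟩
      · exact ⟨hyn, hy⟩
    · right
      rw [edgeCol_rb_ge (le_max_of_le_right (not_lt.1 hyn))]
      simp
  · rintro (hc | hc)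
    · rw [Finset.coe_image, Set.mem_image] at hc
      obtain ⟨p, hp, rfl⟩ := hc
      rw [Finset.mem_coe, Finset.mem_filter, Finset.mem_product] at hp
      obtain ⟨⟨hp1, hp2⟩, hplt⟩ := hp
      rw [hS, Finset.mem_filter, Finset.mem_range] at hp1 hp2
      exact ⟨p.1, hp1.2, p.2, hp2.2, hplt, by rw [edgeCol_rb_lt hplt hp2.1]⟩
    · simp only [Finset.coe_singleton, Set.mem_singleton_iff] at hc
      subst hc
      obtain ⟨y, hyX, hyn⟩ : ∃ y ∈ X, y ∉ Set.Iio n := (hX.diff (Set.finite_Iio n)).nonempty.imp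
        (fun y hy => ⟨hy.1, hy.2⟩)
      obtain ⟨x, hxX, hxy⟩ : ∃ x ∈ X, x ∉ ({y} : Set ℕ) := (hX.diff (Set.finite_singleton y)).nonempty.imp
        (fun x hx => ⟨hx.1, hx.2⟩)
      rw [Set.mem_Iio, not_lt] at hyn
      rw [Set.mem_singleton_iff] at hxy
      rcases lt_or_gt_of_ne hxy with h | h
      · exact ⟨x, hxX, y, hyX, h, edgeCol_rb_ge (le_max_of_le_right hyn)⟩
      · exact ⟨y, hyX, x, hxX, h, edgeCol_rb_ge (le_max_of_le_left hyn)⟩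

lemma rainbow_ncard (n : ℕ) (X : Set ℕ) (hX : X.Infinite) [DecidablePred (· ∈ X)] :
    (colourSet (rb n) X).ncard =
      ((Finset.range n).filter (· ∈ X)).card * (((Finset.range n).filter (· ∈ X)).card - 1) / 2
        + 1 := by
  classical
  rw [rainbow_colourSet n X hX, Set.ncard_coe_finset]
  set S := (Finset.range n).filter (· ∈ X) with hS
  have hknotin : n * (n - 1) / 2 + 1 ∉
      ((S ×ˢ S).filter (fun p => p.1 < p.2)).image (fun p => ec p.1 p.2) := by
    rw [Finset.mem_image]
    rintro ⟨p, hp, hpe⟩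
    rw [Finset.mem_filter, Finset.mem_product] at hp
    have hp2 : p.2 ∈ Finset.range n := Finset.mem_of_mem_filter _ hp.1.2
    rw [Finset.mem_range] at hp2
    have := ec_le hp.2 hp2
    omega
  rw [Finset.card_union_of_disjoint (Finset.disjoint_singleton_right.2 hknotin)]
  rw [Finset.card_singleton]
  congr 1
  rw [Finset.card_image_of_injOn, card_pairs_lt]
  intro p hp q hq hpq
  rw [Finset.coe_filter] at hp hq
  obtain ⟨-, hp2⟩ := hp
  obtain ⟨-, hq2⟩ := hq
  obtain ⟨h1, h2⟩ := ec_inj hp2 hq2 hpq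
  exact Prod.ext h1 h2

lemma FSet_rb (n : ℕ) (hn : 2 ≤ n) :
    FSet (rb n) (n * (n - 1) / 2 + 1) = (fun s => s * (s - 1) / 2 + 1) '' (Set.Icc 1 n) := by
  classical
  ext m
  constructor
  · rintro ⟨hm, X, hX, hcard⟩
    rw [rainbow_ncard n X hX] at hcard
    set s := ((Finset.range n).filter (· ∈ X)).card with hs
    have hsn : s ≤ n := by
      rw [hs]
      calc ((Finset.range n).filter (· ∈ X)).card ≤ (Finset.range n).card :=
            Finset.card_le_card (Finset.filter_subset _ _)
        _ = n := Finset.card_range n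
    rcases Nat.eq_zero_or_pos s with h0 | hpos
    · refine ⟨1, Set.mem_Icc.2 ⟨le_rfl, by omega⟩, ?_⟩
      show 1 * (1 - 1) / 2 + 1 = m
      rw [h0] at hcard
      norm_num at hcard ⊢
      omega
    · refine ⟨s, Set.mem_Icc.2 ⟨hpos, hsn⟩, ?_⟩
      show s * (s - 1) / 2 + 1 = m
      exact hcard
  · rintro ⟨s, hs, rfl⟩
    rw [Set.mem_Icc] at hs
    show s * (s - 1) / 2 + 1 ∈ FSet (rb n) (n * (n - 1) / 2 + 1)
    refine ⟨?_, ↑(Finset.range s) ∪ Set.Ici n, ?_, ?_⟩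
    · rw [Finset.mem_Icc]
      have := tri_mono hs.2
      omega
    · exact Set.Infinite.mono Set.subset_union_right (Set.Ici_infinite n)
    · rw [rainbow_ncard n _ (Set.Infinite.mono Set.subset_union_right (Set.Ici_infinite n))]
      have hSeq : (Finset.range n).filter (· ∈ (↑(Finset.range s) ∪ Set.Ici n : Set ℕ))
          = Finset.range s := by
        ext x
        simp only [Finset.mem_filter, Finset.mem_range, Set.mem_union, Finset.coe_range,
          Set.mem_Iio, Set.mem_Ici]
        omega
      rw [hSeq, Finset.card_range]

lemma FSet_rb_ncard (n : ℕ) (hn : 2 ≤ n) :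
    (FSet (rb n) (n * (n - 1) / 2 + 1)).ncard = n := by
  rw [FSet_rb n hn, Set.ncard_image_of_injOn, ← Finset.coe_Icc, Set.ncard_coe_finset,
    Nat.card_Icc]
  · omega
  · intro a ha b hb hab
    rw [Set.mem_Icc] at ha hb
    have hab' : a * (a - 1) / 2 + 1 = b * (b - 1) / 2 + 1 := hab
    by_contra hne
    rcases lt_or_gt_of_ne hne with h | h
    · have := tri_lt ha.1 h; omega
    · have := tri_lt hb.1 h; omega


-- ===== lower bound machinery: refining sequences =====

noncomputable def nxt (Δ : ℕ → ℕ → ℕ) (j : ℕ) (B : Set ℕ) : Set ℕ :=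
  @dite _ (∃ c, {x ∈ B | j < x ∧ edgeCol Δ j x = c}.Infinite) (Classical.propDecidable _)
    (fun h => {x ∈ B | j < x ∧ edgeCol Δ j x = h.choose}) (fun _ => Set.univ)

lemma nxt_spec {Δ : ℕ → ℕ → ℕ} {k j : ℕ} {B : Set ℕ} (hB : B.Infinite)
    (hΔ : ∀ x y : ℕ, x ≠ y → edgeCol Δ x y ∈ Finset.Icc 1 k) :
    (nxt Δ j B).Infinite ∧ nxt Δ j B ⊆ B ∧
      ∀ x ∈ nxt Δ j B, j < x ∧ edgeCol Δ j x = edgeCol Δ j (sInf (nxt Δ j B)) := by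
  have hB' : {x ∈ B | j < x}.Infinite := by
    refine Set.Infinite.mono ?_ (hB.diff (Set.finite_Iic j))
    intro x hx
    exact ⟨hx.1, by simpa using hx.2⟩
  have hex : ∃ c, {x ∈ B | j < x ∧ edgeCol Δ j x = c}.Infinite := by
    obtain ⟨c, _, hcc⟩ := pigeon hB' (Finset.Icc 1 k) (edgeCol Δ j)
      (fun x hx => hΔ j x (Nat.ne_of_lt hx.2))
    refine ⟨c, ?_⟩
    have heq : {x ∈ {x ∈ B | j < x} | edgeCol Δ j x = c}
        = {x ∈ B | j < x ∧ edgeCol Δ j x = c} := by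
      ext z; simp only [Set.mem_setOf_eq]; tauto
    rwa [heq] at hcc
  simp only [nxt, dif_pos hex]
  have hCinf : {x ∈ B | j < x ∧ edgeCol Δ j x = hex.choose}.Infinite := hex.choose_spec
  have hmem := Nat.sInf_mem hCinf.nonempty
  refine ⟨hCinf, fun x hx => hx.1, fun x hx => ⟨hx.2.1, ?_⟩⟩
  rw [hx.2.2, hmem.2.2]

noncomputable def ASeq (Δ : ℕ → ℕ → ℕ) : ℕ → Set ℕ
  | 0 => Set.univ
  | i + 1 => nxt Δ (sInf (ASeq Δ i)) (ASeq Δ i)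

noncomputable def aSeq (Δ : ℕ → ℕ → ℕ) (i : ℕ) : ℕ := sInf (ASeq Δ i)

noncomputable def cSeq (Δ : ℕ → ℕ → ℕ) (i : ℕ) : ℕ := edgeCol Δ (aSeq Δ i) (aSeq Δ (i + 1))

section Aseq

variable {Δ : ℕ → ℕ → ℕ} {k : ℕ}

lemma ASeq_infinite (hΔ : ∀ x y : ℕ, x ≠ y → edgeCol Δ x y ∈ Finset.Icc 1 k) : ∀ i, (ASeq Δ i).Infinite := by
  intro i
  induction i with
  | zero => exact Set.infinite_univ
  | succ i ih => exact (nxt_spec ih hΔ).1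

lemma ASeq_props (hΔ : ∀ x y : ℕ, x ≠ y → edgeCol Δ x y ∈ Finset.Icc 1 k) (i : ℕ) : ASeq Δ (i + 1) ⊆ ASeq Δ i ∧
    ∀ x ∈ ASeq Δ (i + 1), aSeq Δ i < x ∧ edgeCol Δ (aSeq Δ i) x = cSeq Δ i := by
  have h := nxt_spec (ASeq_infinite hΔ i) hΔ (j := aSeq Δ i)
  exact ⟨h.2.1, h.2.2⟩

lemma ASeq_antitone (hΔ : ∀ x y : ℕ, x ≠ y → edgeCol Δ x y ∈ Finset.Icc 1 k) {i j : ℕ} (hij : i ≤ j) : ASeq Δ j ⊆ ASeq Δ i := by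
  induction hij with
  | refl => exact Set.Subset.rfl
  | step h ih => exact Set.Subset.trans (ASeq_props hΔ _).1 ih

lemma aSeq_lt_succ (hΔ : ∀ x y : ℕ, x ≠ y → edgeCol Δ x y ∈ Finset.Icc 1 k) (i : ℕ) : aSeq Δ i < aSeq Δ (i + 1) := by
  have hmem : aSeq Δ (i + 1) ∈ ASeq Δ (i + 1) := Nat.sInf_mem (ASeq_infinite hΔ (i + 1)).nonempty
  exact ((ASeq_props hΔ i).2 _ hmem).1

lemma aSeq_strictMono (hΔ : ∀ x y : ℕ, x ≠ y → edgeCol Δ x y ∈ Finset.Icc 1 k) : StrictMono (aSeq Δ) :=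
  strictMono_nat_of_lt_succ (aSeq_lt_succ hΔ)

lemma aSeq_pair (hΔ : ∀ x y : ℕ, x ≠ y → edgeCol Δ x y ∈ Finset.Icc 1 k) {i j : ℕ} (h : i < j) : edgeCol Δ (aSeq Δ i) (aSeq Δ j) = cSeq Δ i := by
  have hmem : aSeq Δ j ∈ ASeq Δ (i + 1) :=
    ASeq_antitone hΔ h (Nat.sInf_mem (ASeq_infinite hΔ j).nonempty)
  exact ((ASeq_props hΔ i).2 _ hmem).2

lemma cSeq_mem (hΔ : ∀ x y : ℕ, x ≠ y → edgeCol Δ x y ∈ Finset.Icc 1 k) (i : ℕ) : cSeq Δ i ∈ Finset.Icc 1 k :=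
  hΔ _ _ (Nat.ne_of_lt (aSeq_lt_succ hΔ i))

end Aseq

noncomputable def BSeq (Δ : ℕ → ℕ → ℕ) (M : Set ℕ) : ℕ → Set ℕ
  | 0 => M
  | j + 1 => nxt Δ j (BSeq Δ M j)

noncomputable def phiSeq (Δ : ℕ → ℕ → ℕ) (M : Set ℕ) (j : ℕ) : ℕ :=
  edgeCol Δ j (sInf (BSeq Δ M (j + 1)))

section Bseq

variable {Δ : ℕ → ℕ → ℕ} {k : ℕ} {M : Set ℕ}

lemma BSeq_infinite (hM : M.Infinite) (hΔ : ∀ x y : ℕ, x ≠ y → edgeCol Δ x y ∈ Finset.Icc 1 k) : ∀ j, (BSeq Δ M j).Infinite := by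
  intro j
  induction j with
  | zero => exact hM
  | succ j ih => exact (nxt_spec ih hΔ).1

lemma BSeq_succ_props (hM : M.Infinite) (hΔ : ∀ x y : ℕ, x ≠ y → edgeCol Δ x y ∈ Finset.Icc 1 k) (j : ℕ) : BSeq Δ M (j + 1) ⊆ BSeq Δ M j ∧
    ∀ x ∈ BSeq Δ M (j + 1), j < x ∧ edgeCol Δ j x = phiSeq Δ M j := by
  have h := nxt_spec (BSeq_infinite hM hΔ j) hΔ (j := j)
  exact ⟨h.2.1, h.2.2⟩

lemma BSeq_antitone (hM : M.Infinite) (hΔ : ∀ x y : ℕ, x ≠ y → edgeCol Δ x y ∈ Finset.Icc 1 k) {i j : ℕ} (hij : i ≤ j) : BSeq Δ M j ⊆ BSeq Δ M i := by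
  induction hij with
  | refl => exact Set.Subset.rfl
  | step h ih => exact Set.Subset.trans (BSeq_succ_props hM hΔ _).1 ih

lemma BSeq_sub_M (hM : M.Infinite) (hΔ : ∀ x y : ℕ, x ≠ y → edgeCol Δ x y ∈ Finset.Icc 1 k) : ∀ j, BSeq Δ M j ⊆ M := by
  intro j
  induction j with
  | zero => exact Set.Subset.rfl
  | succ j ih => exact Set.Subset.trans (BSeq_succ_props hM hΔ j).1 ih

lemma BSeq_ge (hM : M.Infinite) (hΔ : ∀ x y : ℕ, x ≠ y → edgeCol Δ x y ∈ Finset.Icc 1 k) {j x : ℕ} (hx : x ∈ BSeq Δ M j) : j ≤ x := by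
  cases j with
  | zero => exact Nat.zero_le x
  | succ j => exact ((BSeq_succ_props hM hΔ j).2 x hx).1

lemma phiSeq_mem (hM : M.Infinite) (hΔ : ∀ x y : ℕ, x ≠ y → edgeCol Δ x y ∈ Finset.Icc 1 k) (j : ℕ) : phiSeq Δ M j ∈ Finset.Icc 1 k := by
  have hmem : sInf (BSeq Δ M (j + 1)) ∈ BSeq Δ M (j + 1) :=
    Nat.sInf_mem (BSeq_infinite hM hΔ (j + 1)).nonempty
  exact hΔ _ _ (Nat.ne_of_lt ((BSeq_succ_props hM hΔ j).2 _ hmem).1)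

lemma BSeq_edge (hM : M.Infinite) (hΔ : ∀ x y : ℕ, x ≠ y → edgeCol Δ x y ∈ Finset.Icc 1 k) {j x m : ℕ} (hx : x < j) (hm : m ∈ BSeq Δ M j) :
    edgeCol Δ x m = phiSeq Δ M x := by
  have hm' : m ∈ BSeq Δ M (x + 1) := BSeq_antitone hM hΔ hx hm
  exact ((BSeq_succ_props hM hΔ x).2 m hm').2

end Bseq

-- ===== the finite chain lemma =====

noncomputable def colF (Δ : ℕ → ℕ → ℕ) (φ : ℕ → ℕ) (c0 : ℕ) (S : Finset ℕ) : Finset ℕ :=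
  ((S ×ˢ S).filter (fun p => p.1 < p.2)).image (fun p => edgeCol Δ p.1 p.2)
    ∪ S.image φ ∪ {c0}

lemma mem_colF {Δ : ℕ → ℕ → ℕ} {φ : ℕ → ℕ} {c0 : ℕ} {S : Finset ℕ} {c : ℕ} :
    c ∈ colF Δ φ c0 S ↔
      (∃ x ∈ S, ∃ y ∈ S, x < y ∧ edgeCol Δ x y = c) ∨ (∃ x ∈ S, φ x = c) ∨ c = c0 := by
  unfold colF
  simp only [Finset.mem_union, Finset.mem_image, Finset.mem_filter, Finset.mem_product,
    Finset.mem_singleton]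
  constructor
  · rintro ((⟨p, ⟨⟨h1, h2⟩, h3⟩, h4⟩ | ⟨x, h1, h2⟩) | h)
    · exact Or.inl ⟨p.1, h1, p.2, h2, h3, h4⟩
    · exact Or.inr (Or.inl ⟨x, h1, h2⟩)
    · exact Or.inr (Or.inr h)
  · rintro (⟨x, h1, y, h2, h3, h4⟩ | ⟨x, h1, h2⟩ | h)
    · exact Or.inl (Or.inl ⟨(x, y), ⟨⟨h1, h2⟩, h3⟩, h4⟩)
    · exact Or.inl (Or.inr ⟨x, h1, h2⟩)
    · exact Or.inr h

lemma c0_mem_colF {Δ : ℕ → ℕ → ℕ} {φ : ℕ → ℕ} {c0 : ℕ} {S : Finset ℕ} :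
    c0 ∈ colF Δ φ c0 S := mem_colF.2 (Or.inr (Or.inr rfl))

lemma colF_mono {Δ : ℕ → ℕ → ℕ} {φ : ℕ → ℕ} {c0 : ℕ} {S T : Finset ℕ} (h : S ⊆ T) :
    colF Δ φ c0 S ⊆ colF Δ φ c0 T := by
  intro c hc
  rcases mem_colF.1 hc with ⟨x, h1, y, h2, h3, h4⟩ | ⟨x, h1, h2⟩ | hc0
  · exact mem_colF.2 (Or.inl ⟨x, h h1, y, h h2, h3, h4⟩)
  · exact mem_colF.2 (Or.inr (Or.inl ⟨x, h h1, h2⟩))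
  · exact mem_colF.2 (Or.inr (Or.inr hc0))

lemma colF_empty {Δ : ℕ → ℕ → ℕ} {φ : ℕ → ℕ} {c0 : ℕ} : colF Δ φ c0 ∅ = {c0} := by
  unfold colF
  simp

lemma colF_card_pos {Δ : ℕ → ℕ → ℕ} {φ : ℕ → ℕ} {c0 : ℕ} {S : Finset ℕ} :
    1 ≤ (colF Δ φ c0 S).card :=
  Finset.card_pos.2 ⟨c0, c0_mem_colF⟩

/-- value bound along a chain with jump conditions -/
lemma chain_val_bound {v : ℕ → ℕ} {t : ℕ} (h1 : v 1 = 1)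
    (hj : ∀ i, 1 ≤ i → i < t → v (i + 1) ≤ v i + i) (ht : 1 ≤ t) :
    v t ≤ 1 + t * (t - 1) / 2 := by
  have key : ∀ i, 1 ≤ i → i ≤ t → v i ≤ 1 + i * (i - 1) / 2 := by
    intro i
    induction i with
    | zero => omega
    | succ m ih =>
      intro _ hle
      rcases Nat.eq_zero_or_pos m with hm | hm
      · subst hm; simp [h1]
      · have h2 := ih hm (by omega)
        have h3 := hj m hm (by omega)
        have h4 := tri_succ m
        have h5 : (m + 1) * (m + 1 - 1) / 2 = (m + 1) * m / 2 := by simp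
        omega
  exact key t ht le_rfl

/-- strict monotonicity along the chain -/
lemma chain_strict_mono {v : ℕ → ℕ} {t : ℕ}
    (hj : ∀ i, 1 ≤ i → i < t → v i < v (i + 1)) :
    ∀ i j, 1 ≤ i → i < j → j ≤ t → v i < v j := by
  intro i j
  induction j with
  | zero => omega
  | succ m ih =>
    intro h1 h2 h3
    rcases Nat.lt_or_ge i m with him | him
    · exact lt_trans (ih h1 him (by omega)) (hj m (by omega) (by omega))
    · have : i = m := by omega
      subst this
      exact hj i h1 (by omega)

/-- The key chain lemma. -/
lemma chain_lemma (Δ : ℕ → ℕ → ℕ) (φ : ℕ → ℕ) (c0 : ℕ) (S : Finset ℕ) :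
    ∃ t : ℕ, ∃ v : ℕ → ℕ, 1 ≤ t ∧ v 1 = 1 ∧ v t = (colF Δ φ c0 S).card ∧
      (∀ i, 1 ≤ i → i < t → v i < v (i + 1) ∧ v (i + 1) ≤ v i + i) ∧
      (∀ i, 1 ≤ i → i ≤ t → ∃ T, T ⊆ S ∧ (colF Δ φ c0 T).card = v i) := by
  classical
  induction S using Finset.strongInductionOn with
  | _ S ih =>
  rcases S.eq_empty_or_nonempty with rfl | hS
  · refine ⟨1, fun _ => 1, le_rfl, rfl, ?_, by omega, ?_⟩
    · rw [colF_empty, Finset.card_singleton]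
    · intro i _ _
      exact ⟨∅, Finset.Subset.refl _, by rw [colF_empty, Finset.card_singleton]⟩
  obtain ⟨x, hxS, hxmax⟩ := Finset.exists_max_image S
    (fun y => (colF Δ φ c0 (S.erase y)).card) hS
  obtain ⟨t', v', ht'1, hv'1, hv't, hjump, hwit⟩ :=
    ih (S.erase x) (Finset.erase_ssubset hxS)
  have hmono : (colF Δ φ c0 (S.erase x)).card ≤ (colF Δ φ c0 S).card :=
    Finset.card_le_card (colF_mono (Finset.erase_subset _ _))
  by_cases hEq : (colF Δ φ c0 (S.erase x)).card = (colF Δ φ c0 S).card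
  · refine ⟨t', v', ht'1, hv'1, by rw [hv't]; exact hEq, hjump, ?_⟩
    intro i h1 h2
    obtain ⟨T, hT, hg⟩ := hwit i h1 h2
    exact ⟨T, hT.trans (Finset.erase_subset _ _), hg⟩
  have hlt : (colF Δ φ c0 (S.erase x)).card < (colF Δ φ c0 S).card :=
    lt_of_le_of_ne hmono hEq
  set d := (colF Δ φ c0 S).card - (colF Δ φ c0 (S.erase x)).card with hd
  -- the key claim : d ≤ t'
  have hclaim : d ≤ t' := by
    by_contra hcon
    push_neg at hcon   -- t' < d
    have hd2 : 2 ≤ d := by omega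
    have hPsub : ∀ y, colF Δ φ c0 (S.erase y) ⊆ colF Δ φ c0 S :=
      fun y => colF_mono (Finset.erase_subset _ _)
    have hPcard : ∀ y ∈ S, d ≤ (colF Δ φ c0 S \ colF Δ φ c0 (S.erase y)).card := by
      intro y hy
      rw [Finset.card_sdiff_of_subset (hPsub y)]
      have := hxmax y hy
      omega
    -- d ≤ S.card via the structure of the private colours at x
    have hPxsub : colF Δ φ c0 S \ colF Δ φ c0 (S.erase x) ⊆
        insert (φ x) ((S.erase x).image (fun b => edgeCol Δ x b)) := by
      intro c hc
      rw [Finset.mem_sdiff] at hc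
      obtain ⟨hc1, hc2⟩ := hc
      rcases mem_colF.1 hc1 with ⟨a, ha, b, hb, hab, habc⟩ | ⟨a, ha, hac⟩ | hc0
      · rcases eq_or_ne a x with rfl | hax
        · refine Finset.mem_insert.2 (Or.inr (Finset.mem_image.2 ⟨b, ?_, habc⟩))
          exact Finset.mem_erase.2 ⟨by omega, hb⟩
        · rcases eq_or_ne b x with rfl | hbx
          · refine Finset.mem_insert.2 (Or.inr (Finset.mem_image.2 ⟨a, ?_, ?_⟩))
            · exact Finset.mem_erase.2 ⟨by omega, ha⟩
            · rw [edgeCol_comm]; exact habc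
          · exact absurd (mem_colF.2 (Or.inl ⟨a, Finset.mem_erase.2 ⟨hax, ha⟩, b,
              Finset.mem_erase.2 ⟨hbx, hb⟩, hab, habc⟩)) hc2
      · rcases eq_or_ne a x with rfl | hax
        · exact Finset.mem_insert.2 (Or.inl hac.symm)
        · exact absurd (mem_colF.2 (Or.inr (Or.inl ⟨a, Finset.mem_erase.2 ⟨hax, ha⟩, hac⟩))) hc2
      · exact absurd (mem_colF.2 (Or.inr (Or.inr hc0))) hc2
    have hdS : d ≤ S.card := by
      have h1 : d ≤ (colF Δ φ c0 S \ colF Δ φ c0 (S.erase x)).card := hPcard x hxS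
      have h2 := Finset.card_le_card hPxsub
      have h3 := Finset.card_insert_le (φ x) ((S.erase x).image (fun b => edgeCol Δ x b))
      have h4 := Finset.card_image_le (f := fun b => edgeCol Δ x b) (s := S.erase x)
      have h5 := Finset.card_erase_of_mem hxS
      have h6 : 1 ≤ S.card := Finset.card_pos.2 hS
      omega
    rcases Nat.lt_or_ge S.card 2 with hcard2 | hcard2
    · omega
    -- surviving private colours
    have hP'card : ∀ y ∈ S.erase x, d - 1 ≤
        ((colF Δ φ c0 S \ colF Δ φ c0 (S.erase y))
          ∩ ((colF Δ φ c0 (S.erase x)).erase c0)).card := by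
      intro y hy
      have hyS : y ∈ S := Finset.mem_of_mem_erase hy
      have hyx : y ≠ x := (Finset.mem_erase.1 hy).1
      set P := colF Δ φ c0 S \ colF Δ φ c0 (S.erase y) with hP
      set P'y := P ∩ ((colF Δ φ c0 (S.erase x)).erase c0) with hP'y
      have hsub1 : P \ P'y ⊆ {edgeCol Δ x y} := by
        intro c hc
        rw [Finset.mem_sdiff] at hc
        obtain ⟨hcP, hcnP⟩ := hc
        have hcP' := hcP
        rw [hP, Finset.mem_sdiff] at hcP'
        obtain ⟨hc1, hc2⟩ := hcP'
        have hcnc0 : c ≠ c0 := fun h => hc2 (h ▸ c0_mem_colF)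
        have hcnS' : c ∉ colF Δ φ c0 (S.erase x) := by
          intro hmem
          exact hcnP (Finset.mem_inter.2 ⟨hcP, Finset.mem_erase.2 ⟨hcnc0, hmem⟩⟩)
        rcases mem_colF.1 hc1 with ⟨a, ha, b, hb, hab, habc⟩ | ⟨a, ha, hac⟩ | hc0
        · have hy' : a = y ∨ b = y := by
            by_contra hno
            push_neg at hno
            exact hc2 (mem_colF.2 (Or.inl ⟨a, Finset.mem_erase.2 ⟨hno.1, ha⟩, b,
              Finset.mem_erase.2 ⟨hno.2, hb⟩, hab, habc⟩))
          have hx' : a = x ∨ b = x := by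
            by_contra hno
            push_neg at hno
            exact hcnS' (mem_colF.2 (Or.inl ⟨a, Finset.mem_erase.2 ⟨hno.1, ha⟩, b,
              Finset.mem_erase.2 ⟨hno.2, hb⟩, hab, habc⟩))
          rw [Finset.mem_singleton]
          rcases hy' with rfl | rfl <;> rcases hx' with h | h
          · omega
          · rw [← habc, edgeCol_comm, h]
          · rw [← habc, h]
          · omega
        · have hay : a = y := by
            by_contra hno
            exact hc2 (mem_colF.2 (Or.inr (Or.inl ⟨a, Finset.mem_erase.2 ⟨hno, ha⟩, hac⟩)))
          have hax : a = x := by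
            by_contra hno
            exact hcnS' (mem_colF.2 (Or.inr (Or.inl ⟨a, Finset.mem_erase.2 ⟨hno, ha⟩, hac⟩)))
          omega
        · exact absurd hc0 hcnc0
      have h1 : P.card ≤ P'y.card + 1 := by
        have hsub2 : P ⊆ P'y ∪ (P \ P'y) := by
          intro c hc
          by_cases hmem : c ∈ P'y
          · exact Finset.mem_union.2 (Or.inl hmem)
          · exact Finset.mem_union.2 (Or.inr (Finset.mem_sdiff.2 ⟨hc, hmem⟩))
        calc P.card ≤ (P'y ∪ (P \ P'y)).card := Finset.card_le_card hsub2
          _ ≤ P'y.card + (P \ P'y).card := Finset.card_union_le _ _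
          _ ≤ P'y.card + 1 := by
              have := Finset.card_le_card hsub1
              simp only [Finset.card_singleton] at this
              omega
      have h2 : d ≤ P.card := hPcard y hyS
      omega
    -- double counting
    have hkey : (S.erase x).card * (d - 1) ≤
        2 * ((colF Δ φ c0 (S.erase x)).erase c0).card := by
      set S' := S.erase x with hS'
      set C' := (colF Δ φ c0 (S.erase x)).erase c0 with hC'
      set P' := fun y => (colF Δ φ c0 S \ colF Δ φ c0 (S.erase y)) ∩ C' with hP'
      set Q := (S' ×ˢ C').filter (fun p => p.2 ∈ P' p.1) with hQ
      have hfib1 : Q.card = ∑ y ∈ S', ((Q.filter (fun p => p.1 = y)).card) :=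
        Finset.card_eq_sum_card_fiberwise (fun p hp => by
          rw [hQ, Finset.mem_coe, Finset.mem_filter, Finset.mem_product] at hp
          exact hp.1.1)
      have hfib2 : Q.card = ∑ c ∈ C', ((Q.filter (fun p => p.2 = c)).card) :=
        Finset.card_eq_sum_card_fiberwise (fun p hp => by
          rw [hQ, Finset.mem_coe, Finset.mem_filter, Finset.mem_product] at hp
          exact hp.1.2)
      have hfib1' : ∀ y ∈ S', (Q.filter (fun p => p.1 = y)).card = (P' y).card := by
        intro y hy
        have heq : Q.filter (fun p => p.1 = y) = (P' y).image (fun c => (y, c)) := by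
          ext p
          rw [Finset.mem_filter, hQ, Finset.mem_filter, Finset.mem_product, Finset.mem_image]
          constructor
          · rintro ⟨⟨⟨hp1, hp2⟩, hp3⟩, hp4⟩
            exact ⟨p.2, by rw [← hp4]; exact hp3, by rw [← hp4]⟩
          · rintro ⟨c, hc, rfl⟩
            have hcC' : c ∈ C' := Finset.mem_of_mem_inter_right hc
            exact ⟨⟨⟨hy, hcC'⟩, hc⟩, rfl⟩
        rw [heq, Finset.card_image_of_injective _ (fun a b hab => by simpa using hab)]
      have hfib2' : ∀ c ∈ C', (Q.filter (fun p => p.2 = c)).card ≤ 2 := by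
        intro c hcC
        have heq : Q.filter (fun p => p.2 = c)
            = (S'.filter (fun y => c ∈ P' y)).image (fun y => (y, c)) := by
          ext p
          rw [Finset.mem_filter, hQ, Finset.mem_filter, Finset.mem_product, Finset.mem_image]
          constructor
          · rintro ⟨⟨⟨hp1, hp2⟩, hp3⟩, hp4⟩
            exact ⟨p.1, Finset.mem_filter.2 ⟨hp1, by rw [← hp4]; exact hp3⟩, by rw [← hp4]⟩
          · rintro ⟨y, hy, rfl⟩
            rw [Finset.mem_filter] at hy
            exact ⟨⟨⟨hy.1, hcC⟩, hy.2⟩, rfl⟩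
        rw [heq, Finset.card_image_of_injective _ (fun a b hab => by simpa using hab)]
        by_contra hgt
        push_neg at hgt
        obtain ⟨y1, y2, y3, hy1, hy2, hy3, h12, h13, h23⟩ :=
          Finset.two_lt_card_iff.1 hgt
        rw [Finset.mem_filter] at hy1 hy2 hy3
        have hnot : ∀ y, c ∈ P' y → c ∉ colF Δ φ c0 (S.erase y) := by
          intro y hcy
          have hmem := Finset.mem_of_mem_inter_left hcy
          rw [Finset.mem_sdiff] at hmem
          exact hmem.2
        have hcS' : c ∈ colF Δ φ c0 (S.erase x) :=
          Finset.mem_of_mem_erase (Finset.mem_of_mem_inter_right hy1.2)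
        have hcnc0 : c ≠ c0 :=
          (Finset.mem_erase.1 (Finset.mem_of_mem_inter_right hy1.2)).1
        rcases mem_colF.1 hcS' with ⟨a, ha, b, hb, hab, habc⟩ | ⟨a, ha, hac⟩ | hc0
        · have hend : ∀ y, c ∈ P' y → a = y ∨ b = y := by
            intro y hcy
            by_contra hno
            push_neg at hno
            have haS : a ∈ S := Finset.mem_of_mem_erase ha
            have hbS : b ∈ S := Finset.mem_of_mem_erase hb
            exact (hnot y hcy) (mem_colF.2 (Or.inl ⟨a,
              Finset.mem_erase.2 ⟨hno.1, haS⟩, b,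
              Finset.mem_erase.2 ⟨hno.2, hbS⟩, hab, habc⟩))
          have e1 := hend y1 hy1.2
          have e2 := hend y2 hy2.2
          have e3 := hend y3 hy3.2
          rcases e1 with rfl | rfl <;> rcases e2 with h | h <;> rcases e3 with h' | h' <;> omega
        · have haeq : ∀ y, c ∈ P' y → a = y := by
            intro y hcy
            by_contra hno
            exact (hnot y hcy) (mem_colF.2 (Or.inr (Or.inl ⟨a,
              Finset.mem_erase.2 ⟨hno, Finset.mem_of_mem_erase ha⟩, hac⟩)))
          have a1 := haeq y1 hy1.2
          have a2 := haeq y2 hy2.2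
          omega
        · exact absurd hc0 hcnc0
      have hsum1 : ∑ y ∈ S', (P' y).card = Q.card := by
        rw [hfib1]
        exact Finset.sum_congr rfl (fun y hy => (hfib1' y hy).symm)
      have hsum2 : Q.card ≤ 2 * C'.card := by
        rw [hfib2]
        calc ∑ c ∈ C', (Q.filter (fun p => p.2 = c)).card ≤ ∑ _c ∈ C', 2 :=
              Finset.sum_le_sum hfib2'
          _ = 2 * C'.card := by rw [Finset.sum_const, smul_eq_mul, mul_comm]
      have hsum0 : S'.card * (d - 1) ≤ ∑ y ∈ S', (P' y).card := by
        calc S'.card * (d - 1) = ∑ _y ∈ S', (d - 1) := by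
              rw [Finset.sum_const, smul_eq_mul, mul_comm]
          _ ≤ ∑ y ∈ S', (P' y).card := Finset.sum_le_sum (fun y hy => hP'card y hy)
      omega
    -- finish the contradiction
    have hC'card : ((colF Δ φ c0 (S.erase x)).erase c0).card
        = (colF Δ φ c0 (S.erase x)).card - 1 :=
      Finset.card_erase_of_mem c0_mem_colF
    have hgS'bound : (colF Δ φ c0 (S.erase x)).card ≤ 1 + t' * (t' - 1) / 2 := by
      rw [← hv't]
      exact chain_val_bound hv'1 (fun i h1 h2 => (hjump i h1 h2).2) ht'1
    have h2g : 2 * ((colF Δ φ c0 (S.erase x)).card - 1) ≤ t' * (t' - 1) := by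
      have := two_mul_tri t'
      have hpos := colF_card_pos (Δ := Δ) (φ := φ) (c0 := c0) (S := S.erase x)
      omega
    have htd : t' * (t' - 1) ≤ (d - 1) * (d - 2) :=
      Nat.mul_le_mul (by omega) (by omega)
    have hS'card : (S.erase x).card = S.card - 1 := Finset.card_erase_of_mem hxS
    have hfin : (S.card - 1) * (d - 1) ≤ (d - 2) * (d - 1) := by
      calc (S.card - 1) * (d - 1) = (S.erase x).card * (d - 1) := by rw [hS'card]
        _ ≤ 2 * ((colF Δ φ c0 (S.erase x)).erase c0).card := hkey
        _ = 2 * ((colF Δ φ c0 (S.erase x)).card - 1) := by rw [hC'card]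
        _ ≤ t' * (t' - 1) := h2g
        _ ≤ (d - 1) * (d - 2) := htd
        _ = (d - 2) * (d - 1) := mul_comm _ _
    have hfin2 : S.card - 1 ≤ d - 2 :=
      Nat.le_of_mul_le_mul_right hfin (by omega)
    omega
  -- build the extended chain
  refine ⟨t' + 1, fun i => if i = t' + 1 then (colF Δ φ c0 S).card else v' i,
    by omega, ?_, ?_, ?_, ?_⟩
  · show (if 1 = t' + 1 then (colF Δ φ c0 S).card else v' 1) = 1
    rw [if_neg (by omega)]
    exact hv'1
  · show (if t' + 1 = t' + 1 then (colF Δ φ c0 S).card else v' (t' + 1))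
      = (colF Δ φ c0 S).card
    rw [if_pos rfl]
  · intro i h1 h2
    show (if i = t' + 1 then (colF Δ φ c0 S).card else v' i)
        < (if i + 1 = t' + 1 then (colF Δ φ c0 S).card else v' (i + 1)) ∧
      (if i + 1 = t' + 1 then (colF Δ φ c0 S).card else v' (i + 1))
        ≤ (if i = t' + 1 then (colF Δ φ c0 S).card else v' i) + i
    rw [if_neg (by omega)]
    rcases Nat.lt_or_ge i t' with hit | hit
    · rw [if_neg (by omega)]
      exact hjump i h1 hit
    · have hieq : i = t' := by omega
      subst hieq
      rw [if_pos rfl]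
      constructor
      · rw [hv't]; exact hlt
      · rw [hv't]; omega
  · intro i h1 h2
    rcases Nat.lt_or_ge i (t' + 1) with hit | hit
    · obtain ⟨T, hT, hg⟩ := hwit i h1 (by omega)
      refine ⟨T, hT.trans (Finset.erase_subset _ _), ?_⟩
      show (colF Δ φ c0 T).card = (if i = t' + 1 then (colF Δ φ c0 S).card else v' i)
      rw [if_neg (by omega)]
      exact hg
    · have hieq : i = t' + 1 := by omega
      subst hieq
      refine ⟨S, Finset.Subset.refl _, ?_⟩
      show (colF Δ φ c0 S).card
        = (if t' + 1 = t' + 1 then (colF Δ φ c0 S).card else v' (t' + 1))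
      rw [if_pos rfl]

-- ===== the lower bound =====

lemma colF_sub_Icc {Δ : ℕ → ℕ → ℕ} {k c0 : ℕ} {M : Set ℕ} (hM : M.Infinite)
    (hΔ : ∀ x y : ℕ, x ≠ y → edgeCol Δ x y ∈ Finset.Icc 1 k)
    (hc0 : c0 ∈ Finset.Icc 1 k) (T : Finset ℕ) :
    colF Δ (phiSeq Δ M) c0 T ⊆ Finset.Icc 1 k := by
  intro c hc
  rcases mem_colF.1 hc with ⟨a, _, b, _, hab, habc⟩ | ⟨a, _, hac⟩ | hcc0
  · rw [← habc]; exact hΔ a b (Nat.ne_of_lt hab)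
  · rw [← hac]; exact phiSeq_mem hM hΔ a
  · rw [hcc0]; exact hc0

lemma lower_bound (Δ : ℕ → ℕ → ℕ) (k n : ℕ) (hn : 2 ≤ n)
    (hk : k = n * (n - 1) / 2 + 1) (hcol : IsColouring Δ k) :
    n ≤ (FSet Δ k).ncard := by
  classical
  obtain ⟨hΔ, hsurj⟩ := hcol
  -- a monochromatic infinite set M with colour c0
  obtain ⟨c0, hc0Icc, hI⟩ := pigeon (Set.infinite_univ (α := ℕ)) (Finset.Icc 1 k)
    (cSeq Δ) (fun i _ => cSeq_mem hΔ i)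
  set M := aSeq Δ '' {i ∈ Set.univ | cSeq Δ i = c0} with hM
  have hMinf : M.Infinite := hI.image ((aSeq_strictMono hΔ).injective.injOn)
  have hMmono : ∀ x ∈ M, ∀ y ∈ M, x ≠ y → edgeCol Δ x y = c0 := by
    rintro x ⟨i, hi, rfl⟩ y ⟨j, hj, rfl⟩ hxy
    have hij : i ≠ j := fun h => hxy (by rw [h])
    rcases lt_or_gt_of_ne hij with h | h
    · rw [aSeq_pair hΔ h]; exact hi.2
    · rw [edgeCol_comm, aSeq_pair hΔ h]; exact hj.2
  -- the bridge between infinite colour sets and finite colour footprints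
  have hbridge : ∀ (T : Finset ℕ) (j : ℕ), (∀ x ∈ T, x < j) →
      colourSet Δ (↑T ∪ BSeq Δ M j) = ↑(colF Δ (phiSeq Δ M) c0 T) := by
    intro T j hTj
    ext c
    constructor
    · rw [mem_colourSet_iff]
      rintro ⟨a, ha, b, hb, hab, rfl⟩
      rw [Set.mem_union] at ha hb
      rw [Finset.mem_coe]
      rcases ha with ha | ha <;> rcases hb with hb | hb
      · rw [Finset.mem_coe] at ha hb
        exact mem_colF.2 (Or.inl ⟨a, ha, b, hb, hab, rfl⟩)
      · rw [Finset.mem_coe] at ha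
        rw [BSeq_edge hMinf hΔ (hTj a ha) hb]
        exact mem_colF.2 (Or.inr (Or.inl ⟨a, ha, rfl⟩))
      · rw [Finset.mem_coe] at hb
        have h1 : j ≤ a := BSeq_ge hMinf hΔ ha
        have h2 : b < j := hTj b hb
        omega
      · rw [hMmono a (BSeq_sub_M hMinf hΔ j ha) b (BSeq_sub_M hMinf hΔ j hb)
          (Nat.ne_of_lt hab)]
        exact mem_colF.2 (Or.inr (Or.inr rfl))
    · intro hc
      rw [Finset.mem_coe] at hc
      rcases mem_colF.1 hc with ⟨a, ha, b, hb, hab, habc⟩ | ⟨a, ha, hac⟩ | hcc0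
      · exact mem_colourSet_iff.2 ⟨a, Set.mem_union_left _ (Finset.mem_coe.2 ha),
          b, Set.mem_union_left _ (Finset.mem_coe.2 hb), hab, habc⟩
      · have hmem : sInf (BSeq Δ M j) ∈ BSeq Δ M j :=
          Nat.sInf_mem (BSeq_infinite hMinf hΔ j).nonempty
        have hlt : a < sInf (BSeq Δ M j) :=
          lt_of_lt_of_le (hTj a ha) (BSeq_ge hMinf hΔ hmem)
        refine mem_colourSet_iff.2 ⟨a, Set.mem_union_left _ (Finset.mem_coe.2 ha),
          sInf (BSeq Δ M j), Set.mem_union_right _ hmem, hlt, ?_⟩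
        rw [BSeq_edge hMinf hΔ (hTj a ha) hmem]
        exact hac
      · have hmem1 : sInf (BSeq Δ M j) ∈ BSeq Δ M j :=
          Nat.sInf_mem (BSeq_infinite hMinf hΔ j).nonempty
        obtain ⟨m2, hm2, hm2ne⟩ :
            ∃ m2 ∈ BSeq Δ M j, m2 ∉ ({sInf (BSeq Δ M j)} : Set ℕ) :=
          ((BSeq_infinite hMinf hΔ j).diff
            (Set.finite_singleton _)).nonempty.imp (fun z hz => ⟨hz.1, hz.2⟩)
        rw [Set.mem_singleton_iff] at hm2ne
        subst hcc0
        exact ⟨sInf (BSeq Δ M j), Set.mem_union_right _ hmem1, m2,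
          Set.mem_union_right _ hm2, fun h => hm2ne h.symm,
          hMmono _ (BSeq_sub_M hMinf hΔ j hmem1) _ (BSeq_sub_M hMinf hΔ j hm2)
            (fun h => hm2ne h.symm)⟩
  -- every finite colour footprint value is attained in FSet
  have hmemF : ∀ T : Finset ℕ, (colF Δ (phiSeq Δ M) c0 T).card ∈ FSet Δ k := by
    intro T
    have hTj : ∀ x ∈ T, x < T.sup id + 1 := by
      intro x hx
      exact Nat.lt_succ_of_le (Finset.le_sup (f := id) hx)
    refine ⟨?_, ↑T ∪ BSeq Δ M (T.sup id + 1), ?_, ?_⟩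
    · rw [Finset.mem_Icc]
      have h1 := colF_card_pos (Δ := Δ) (φ := phiSeq Δ M) (c0 := c0) (S := T)
      have h2 := Finset.card_le_card (colF_sub_Icc hMinf hΔ hc0Icc T)
      rw [Nat.card_Icc] at h2
      omega
    · exact Set.Infinite.mono Set.subset_union_right
        (BSeq_infinite hMinf hΔ (T.sup id + 1))
    · rw [hbridge T (T.sup id + 1) hTj, Set.ncard_coe_finset]
  -- a finite set attaining all k colours
  have hfull : ∃ Sf : Finset ℕ, colF Δ (phiSeq Δ M) c0 Sf = Finset.Icc 1 k := by
    have hW : ∀ c ∈ Finset.Icc 1 k, ∃ p : ℕ × ℕ, p.1 ≠ p.2 ∧ edgeCol Δ p.1 p.2 = c := by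
      intro c hc
      obtain ⟨x, y, hxy, he⟩ := hsurj c hc
      exact ⟨(x, y), hxy, he⟩
    choose W hW1 hW2 using hW
    set N := (Finset.Icc 1 k).attach.sup
      (fun c => max (W c.1 c.2).1 (W c.1 c.2).2) + 1 with hN
    refine ⟨Finset.range N, ?_⟩
    apply Finset.Subset.antisymm
    · exact colF_sub_Icc hMinf hΔ hc0Icc _
    · intro c hc
      have hlt : (W c hc).1 < N ∧ (W c hc).2 < N := by
        have h1 := Finset.le_sup (f := fun c : {x // x ∈ Finset.Icc 1 k} =>
          max (W c.1 c.2).1 (W c.1 c.2).2) (Finset.mem_attach _ ⟨c, hc⟩)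
        have h1' : max (W c hc).1 (W c hc).2 ≤ (Finset.Icc 1 k).attach.sup
            (fun c => max (W c.1 c.2).1 (W c.1 c.2).2) := h1
        have ha : (W c hc).1 ≤ max (W c hc).1 (W c hc).2 := le_max_left _ _
        have hb : (W c hc).2 ≤ max (W c hc).1 (W c hc).2 := le_max_right _ _
        constructor <;> omega
      have hne := hW1 c hc
      have he := hW2 c hc
      rcases lt_or_gt_of_ne hne with h | h
      · exact mem_colF.2 (Or.inl ⟨(W c hc).1, Finset.mem_range.2 hlt.1,
          (W c hc).2, Finset.mem_range.2 hlt.2, h, he⟩)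
      · exact mem_colF.2 (Or.inl ⟨(W c hc).2, Finset.mem_range.2 hlt.2,
          (W c hc).1, Finset.mem_range.2 hlt.1, h, by rw [edgeCol_comm]; exact he⟩)
  obtain ⟨Sf, hSf⟩ := hfull
  obtain ⟨t, v, ht1, hv1, hvt, hjump, hwit⟩ := chain_lemma Δ (phiSeq Δ M) c0 Sf
  have hvtk : v t = k := by rw [hvt, hSf, Nat.card_Icc]; omega
  have hkb : k ≤ 1 + t * (t - 1) / 2 := by
    rw [← hvtk]
    exact chain_val_bound hv1 (fun i a b => (hjump i a b).2) ht1
  have hnt : n ≤ t := by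
    by_contra hcon
    push_neg at hcon
    have h1 : t * (t - 1) ≤ (n - 1) * (n - 2) := Nat.mul_le_mul (by omega) (by omega)
    have h2 : (n - 2) * (n - 1) < n * (n - 1) :=
      Nat.mul_lt_mul_of_lt_of_le (by omega) (le_refl (n - 1)) (by omega)
    have h2' : (n - 1) * (n - 2) = (n - 2) * (n - 1) := mul_comm _ _
    have h3 := two_mul_tri t
    have h4 := two_mul_tri n
    omega
  have himg : v '' (Set.Icc 1 t) ⊆ FSet Δ k := by
    rintro m ⟨i, hi, rfl⟩
    rw [Set.mem_Icc] at hi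
    obtain ⟨T, hT, hg⟩ := hwit i hi.1 hi.2
    rw [← hg]
    exact hmemF T
  have hFfin : (FSet Δ k).Finite := by
    apply Set.Finite.subset (Finset.finite_toSet (Finset.Icc 1 k))
    intro m hm
    exact Finset.mem_coe.2 hm.1
  have hinj : Set.InjOn v (Set.Icc 1 t) := by
    intro a ha b hb hab
    rw [Set.mem_Icc] at ha hb
    by_contra hne
    have hsm := chain_strict_mono (t := t) (fun i h1 h2 => (hjump i h1 h2).1)
    rcases lt_or_gt_of_ne hne with h | h
    · exact absurd hab (Nat.ne_of_lt (hsm a b ha.1 h hb.2))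
    · exact absurd hab.symm (Nat.ne_of_lt (hsm b a hb.1 h ha.2))
  calc n ≤ t := hnt
    _ = (v '' Set.Icc 1 t).ncard := by
        rw [Set.ncard_image_of_injOn hinj, ← Finset.coe_Icc, Set.ncard_coe_finset,
          Nat.card_Icc]
        omega
    _ ≤ (FSet Δ k).ncard := Set.ncard_le_ncard himg hFfin

/-- For every `n ≥ 2` and `k = n(n-1)/2 + 1` there is a surjective colouring
`Δ : ℕ^(2) ↠ [k]` (the small-rainbow colouring) with `|F_Δ| = n`; consequently
`ψ(n(n-1)/2 + 1) = n`. -/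
theorem psi_choose_add_one (n : ℕ) (hn : 2 ≤ n) :
    (∃ Δ : ℕ → ℕ → ℕ, IsColouring Δ (n * (n - 1) / 2 + 1) ∧
      (FSet Δ (n * (n - 1) / 2 + 1)).ncard = n) ∧
    psi (n * (n - 1) / 2 + 1) = n := by
  have hcol : IsColouring (rb n) (n * (n - 1) / 2 + 1) := isColouring_rb n hn
  have hnc := FSet_rb_ncard n hn
  refine ⟨⟨rb n, hcol, hnc⟩, ?_⟩
  apply le_antisymm
  · exact Nat.sInf_le ⟨rb n, hcol, hnc⟩
  · have hne : {m | ∃ Δ : ℕ → ℕ → ℕ, IsColouring Δ (n * (n - 1) / 2 + 1) ∧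
        (FSet Δ (n * (n - 1) / 2 + 1)).ncard = m}.Nonempty := ⟨n, rb n, hcol, hnc⟩
    apply le_csInf hne
    rintro m ⟨Δ, hΔcol, rfl⟩
    exact lower_bound Δ _ n hn rfl hΔcol
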